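/- Let H, B be self-adjoint matrices with ‖H‖ ≤ 1 such that E_{S₁}(B) H E_{S₂}(B) = 0 whenever dist(S₁, S₂) ≥ Δ > 0. Fix S₁, S₂ with d = dist(S₁, S₂) > 0. Then for every real t with |t| ≤ d/(e²Δ), one has ‖E_{S₁}(B) e^{itH} E_{S₂}(B)‖ ≤ e^{-d/Δ} (a Lieb–Robinson-type bound). -/

import Mathlib

/-- The ℓ²→ℓ² operator norm of a square complex matrix. -/
noncomputable def opNorm {n : ℕ} (A : Matrix (Fin n) (Fin n) ℂ) : ℝ :=
  ‖Matrix.toEuclideanCLM (𝕜 := ℂ) A‖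

open Classical in
/-- The spectral projection of a Hermitian matrix `B` onto a set `S ⊆ ℝ`. -/
noncomputable def spectralProj {n : ℕ} {B : Matrix (Fin n) (Fin n) ℂ}
    (hB : B.IsHermitian) (S : Set ℝ) : Matrix (Fin n) (Fin n) ℂ :=
  (hB.eigenvectorUnitary : Matrix (Fin n) (Fin n) ℂ) *
    (Matrix.diagonal fun i => if hB.eigenvalues i ∈ S then (1 : ℂ) else 0) *
    star (hB.eigenvectorUnitary : Matrix (Fin n) (Fin n) ℂ)


namespace LRaux

open Classical

variable {n : ℕ} {B : Matrix (Fin n) (Fin n) ℂ} (hB : B.IsHermitian)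

noncomputable def projAux (f : ℝ → ℂ) : Matrix (Fin n) (Fin n) ℂ :=
  (hB.eigenvectorUnitary : Matrix (Fin n) (Fin n) ℂ) *
    (Matrix.diagonal fun i => f (hB.eigenvalues i)) *
    star (hB.eigenvectorUnitary : Matrix (Fin n) (Fin n) ℂ)

lemma spectralProj_eq (S : Set ℝ) :
    spectralProj hB S = projAux hB (fun x => if x ∈ S then (1:ℂ) else 0) := rfl

lemma projAux_mul (f g : ℝ → ℂ) :
    projAux hB f * projAux hB g = projAux hB (f * g) := by
  unfold projAux
  set U : Matrix (Fin n) (Fin n) ℂ := (hB.eigenvectorUnitary : Matrix (Fin n) (Fin n) ℂ) with hU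
  set D₁ := Matrix.diagonal fun i => f (hB.eigenvalues i) with hD1
  set D₂ := Matrix.diagonal fun i => g (hB.eigenvalues i) with hD2
  have h1 : star U * U = 1 := Unitary.coe_star_mul_self _
  calc U * D₁ * star U * (U * D₂ * star U)
      = U * (D₁ * ((star U * U) * (D₂ * star U))) := by
        simp only [Matrix.mul_assoc]
    _ = U * (D₁ * D₂) * star U := by
        simp only [Matrix.mul_assoc, h1, one_mul]
    _ = U * (Matrix.diagonal fun i => (f * g) (hB.eigenvalues i)) * star U := by
        rw [hD1, hD2, Matrix.diagonal_mul_diagonal]; rfl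

lemma projAux_add (f g : ℝ → ℂ) :
    projAux hB f + projAux hB g = projAux hB (f + g) := by
  unfold projAux
  simp only [Pi.add_apply, ← Matrix.diagonal_add]
  rw [Matrix.mul_add, Matrix.add_mul]

lemma projAux_one : projAux hB 1 = 1 := by
  unfold projAux
  simp [Matrix.diagonal_one, Unitary.coe_mul_star_self]

lemma projAux_zero : projAux hB 0 = 0 := by
  unfold projAux
  simp

lemma proj_mul_proj (S T : Set ℝ) :
    spectralProj hB S * spectralProj hB T =
      projAux hB (fun x => if x ∈ S ∧ x ∈ T then (1:ℂ) else 0) := by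
  rw [spectralProj_eq, spectralProj_eq, projAux_mul]
  have h0 : ((fun x => if x ∈ S then (1:ℂ) else 0) * fun x => if x ∈ T then (1:ℂ) else 0)
      = fun x => if x ∈ S ∧ x ∈ T then (1:ℂ) else 0 := by
    funext x
    by_cases h1 : x ∈ S <;> by_cases h2 : x ∈ T <;> simp [h1, h2]
  rw [h0]

lemma proj_mul_proj_of_disjoint (S T : Set ℝ) (h : ∀ x ∈ S, x ∉ T) :
    spectralProj hB S * spectralProj hB T = 0 := by
  rw [proj_mul_proj]
  have h0 : (fun x => if x ∈ S ∧ x ∈ T then (1:ℂ) else 0) = 0 := by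
    funext x
    simp only [Pi.zero_apply, ite_eq_right_iff, one_ne_zero, imp_false]
    rintro ⟨h1, h2⟩
    exact h x h1 h2
  rw [h0, projAux_zero]

lemma proj_add_proj_compl (T : Set ℝ) :
    spectralProj hB T + spectralProj hB Tᶜ = 1 := by
  rw [spectralProj_eq, spectralProj_eq, projAux_add, ← projAux_one hB]
  exact congrArg (projAux hB) (by funext x; by_cases h : x ∈ T <;> simp [h])

lemma vanish {H : Matrix (Fin n) (Fin n) ℂ} {Δ : ℝ} (hΔ : 0 < Δ)
    (hrange : ∀ S₁ S₂ : Set ℝ, (∀ s ∈ S₁, ∀ t ∈ S₂, Δ ≤ |s - t|) →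
      spectralProj hB S₁ * H * spectralProj hB S₂ = 0)
    (S₁ : Set ℝ) :
    ∀ (k : ℕ) (c : ℝ), 0 < c → (k : ℝ) * Δ < c → ∀ T : Set ℝ,
      (∀ s ∈ S₁, ∀ x ∈ T, c ≤ |s - x|) →
      spectralProj hB S₁ * H ^ k * spectralProj hB T = 0 := by
  intro k
  induction k with
  | zero =>
    intro c hc _ T hT
    rw [pow_zero, mul_one]
    apply proj_mul_proj_of_disjoint
    intro x hx hxT
    have h := hT x hx x hxT
    simp only [sub_self, abs_zero] at h
    linarith
  | succ k ih =>
    intro c hc hkc T hT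
    have hkΔ : (k : ℝ) * Δ < c - Δ := by
      push_cast at hkc; linarith
    have hcΔ : 0 < c - Δ := by
      have : (0:ℝ) ≤ (k : ℝ) * Δ := mul_nonneg (Nat.cast_nonneg k) hΔ.le
      linarith
    set T' : Set ℝ := {x | ∀ s ∈ S₁, c - Δ ≤ |s - x|} with hT'def
    have h1 : spectralProj hB S₁ * H ^ k * spectralProj hB T' = 0 :=
      ih (c - Δ) hcΔ hkΔ T' (fun s hs x hx => hx s hs)
    have h2 : spectralProj hB T'ᶜ * H * spectralProj hB T = 0 := by
      apply hrange
      intro x hx y hy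
      simp only [hT'def, Set.mem_compl_iff, Set.mem_setOf_eq, not_forall] at hx
      obtain ⟨s, hs, hsx⟩ := hx
      push_neg at hsx
      have hyd := hT s hs y hy
      have habs : |s - y| - |s - x| ≤ |x - y| := by
        have h3 := abs_sub_abs_le_abs_sub (s - y) (s - x)
        have h4 : (s - y) - (s - x) = x - y := by ring
        rw [h4] at h3
        exact h3
      linarith
    have key : ∀ (a b h e p q : Matrix (Fin n) (Fin n) ℂ), p + q = 1 →
        a * (b * h) * e = a * b * p * (h * e) + a * b * (q * h * e) := by
      intro a b h e p q hpq
      have h5 : a * b * p * (h * e) + a * b * (q * h * e)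
          = a * b * ((p + q) * (h * e)) := by noncomm_ring
      rw [hpq, one_mul] at h5
      rw [h5]
      noncomm_ring
    rw [pow_succ, key (spectralProj hB S₁) (H ^ k) H (spectralProj hB T)
        (spectralProj hB T') (spectralProj hB T'ᶜ) (proj_add_proj_compl hB T'),
      h1, h2, mul_zero, zero_mul, add_zero]

lemma projAux_star (f : ℝ → ℂ) :
    star (projAux hB f) = projAux hB (fun x => star (f x)) := by
  unfold projAux
  rw [star_mul, star_mul, star_star]
  rw [Matrix.star_eq_conjTranspose (Matrix.diagonal _), Matrix.diagonal_conjTranspose]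
  simp [Matrix.mul_assoc]
  rfl

lemma spectralProj_star (S : Set ℝ) :
    star (spectralProj hB S) = spectralProj hB S := by
  rw [spectralProj_eq, projAux_star]
  exact congrArg (projAux hB)
    (funext fun x => by by_cases h : x ∈ S <;> simp [h])

lemma spectralProj_idem (S : Set ℝ) :
    spectralProj hB S * spectralProj hB S = spectralProj hB S := by
  rw [proj_mul_proj, spectralProj_eq]
  exact congrArg (projAux hB)
    (funext fun x => by by_cases h : x ∈ S <;> simp [h])

lemma norm_toCLM_spectralProj_le (S : Set ℝ) :
    ‖Matrix.toEuclideanCLM (𝕜 := ℂ) (spectralProj hB S)‖ ≤ 1 := by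
  set p := Matrix.toEuclideanCLM (𝕜 := ℂ) (spectralProj hB S) with hp
  have hst : star p = p := by
    rw [hp, ← map_star]
    exact congrArg _ (spectralProj_star hB S)
  have hid : p * p = p := by
    rw [hp, ← map_mul]
    exact congrArg _ (spectralProj_idem hB S)
  have h := CStarRing.norm_star_mul_self (x := p)
  rw [hst, hid] at h
  nlinarith [norm_nonneg p]

lemma toCLM_exp (M : Matrix (Fin n) (Fin n) ℂ) :
    Matrix.toEuclideanCLM (𝕜 := ℂ) (NormedSpace.exp M)
      = NormedSpace.exp (Matrix.toEuclideanCLM (𝕜 := ℂ) M) := by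
  set g := Matrix.toEuclideanCLM (𝕜 := ℂ) (n := Fin n)
  set L : (EuclideanSpace ℂ (Fin n) →L[ℂ] EuclideanSpace ℂ (Fin n)) →ₗ[ℂ]
      Matrix (Fin n) (Fin n) ℂ :=
    { toFun := fun x => g.symm x
      map_add' := fun x y => map_add _ x y
      map_smul' := fun c x => map_smul _ c x } with hL
  have hLc : Continuous L := LinearMap.continuous_of_finiteDimensional L
  have hs : HasSum (fun k => ((k.factorial : ℂ))⁻¹ • (g M) ^ k) (NormedSpace.exp (g M)) := by
    rw [NormedSpace.exp_eq_tsum ℂ]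
    exact (NormedSpace.expSeries_summable' (𝕂 := ℂ) (g M)).hasSum
  have hs2 : HasSum (fun k => ((k.factorial : ℂ))⁻¹ • M ^ k)
      (g.symm (NormedSpace.exp (g M))) := by
    have h3 := hs.map L hLc
    have h4 : (fun k => L (((k.factorial : ℂ))⁻¹ • (g M) ^ k)) = fun k => ((k.factorial : ℂ))⁻¹ • M ^ k := by
      funext k
      show g.symm (((k.factorial : ℂ))⁻¹ • (g M) ^ k) = _
      rw [map_smul, map_pow, StarAlgEquiv.symm_apply_apply]
    rw [← h4]
    exact h3
  have h5 : NormedSpace.exp M = g.symm (NormedSpace.exp (g M)) := by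
    rw [NormedSpace.exp_eq_tsum ℂ]
    exact hs2.tsum_eq
  rw [h5, StarAlgEquiv.apply_symm_apply]

lemma factorial_lower : ∀ (k : ℕ), 1 ≤ k →
    Real.exp 1 * ((k : ℝ) / Real.exp 1) ^ k ≤ (k.factorial : ℝ) := by
  intro k hk
  induction k, hk using Nat.le_induction with
  | base =>
    have hE : (0:ℝ) < Real.exp 1 := Real.exp_pos 1
    simp [Nat.factorial]
  | succ k hk ih =>
    have hE : (0:ℝ) < Real.exp 1 := Real.exp_pos 1
    have hk0 : (0:ℝ) < (k:ℝ) := by exact_mod_cast hk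
    have hfac : ((k+1).factorial : ℝ) = ((k:ℝ)+1) * (k.factorial : ℝ) := by
      rw [Nat.factorial_succ]; push_cast; ring
    have hmain : ((k:ℝ)+1) ^ k ≤ Real.exp 1 * (k:ℝ) ^ k := by
      have h1 : (k:ℝ) + 1 ≤ (k:ℝ) * Real.exp (1/(k:ℝ)) := by
        have h2 := Real.add_one_le_exp (1/(k:ℝ))
        calc (k:ℝ) + 1 = (k:ℝ) * (1/(k:ℝ) + 1) := by field_simp; ring
          _ ≤ (k:ℝ) * Real.exp (1/(k:ℝ)) := by
              apply mul_le_mul_of_nonneg_left h2 hk0.le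
      calc ((k:ℝ)+1) ^ k ≤ ((k:ℝ) * Real.exp (1/(k:ℝ))) ^ k := by
            apply pow_le_pow_left₀ (by positivity) h1
        _ = (k:ℝ) ^ k * Real.exp (1/(k:ℝ)) ^ k := mul_pow _ _ _
        _ = (k:ℝ) ^ k * Real.exp ((k:ℝ) * (1/(k:ℝ))) := by rw [Real.exp_nat_mul]
        _ = Real.exp 1 * (k:ℝ) ^ k := by
            rw [mul_one_div, div_self (ne_of_gt hk0), mul_comm]
    have hstep : Real.exp 1 * (((k:ℝ)+1) / Real.exp 1) ^ (k+1)
        ≤ ((k:ℝ)+1) * (Real.exp 1 * ((k:ℝ) / Real.exp 1) ^ k) := by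
      have e1 : Real.exp 1 * (((k:ℝ)+1) / Real.exp 1) ^ (k+1)
          = ((k:ℝ)+1) * (((k:ℝ)+1) ^ k / Real.exp 1 ^ k) := by
        rw [pow_succ, div_pow]
        field_simp
      have e2 : ((k:ℝ)+1) * (Real.exp 1 * ((k:ℝ) / Real.exp 1) ^ k)
          = ((k:ℝ)+1) * (Real.exp 1 * (k:ℝ) ^ k / Real.exp 1 ^ k) := by
        rw [div_pow]; ring
      rw [e1, e2]
      apply mul_le_mul_of_nonneg_left _ (by positivity)
      exact (div_le_div_iff_of_pos_right (by positivity)).mpr hmain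
    push_cast
    calc Real.exp 1 * (((k:ℝ)+1) / Real.exp 1) ^ (k+1)
        ≤ ((k:ℝ)+1) * (Real.exp 1 * ((k:ℝ) / Real.exp 1) ^ k) := hstep
      _ ≤ ((k:ℝ)+1) * (k.factorial : ℝ) := mul_le_mul_of_nonneg_left ih (by positivity)
      _ = ((k+1).factorial : ℝ) := by rw [hfac]

lemma clm_norm_smul (a : ℂ)
    (T : EuclideanSpace ℂ (Fin n) →L[ℂ] EuclideanSpace ℂ (Fin n)) :
    ‖a • T‖ = ‖a‖ * ‖T‖ := norm_smul a T

lemma pow_div_factorial_le {x : ℝ} (hx : 0 ≤ x) (k : ℕ) (hk : 1 ≤ k)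
    (hxk : x * Real.exp 1 ^ 2 ≤ (k : ℝ)) :
    x ^ k / (k.factorial : ℝ) ≤ (Real.exp 1)⁻¹ * ((Real.exp 1)⁻¹) ^ k := by
  have hE : (0:ℝ) < Real.exp 1 := Real.exp_pos 1
  have hk0 : (0:ℝ) < (k:ℝ) := by exact_mod_cast hk
  have hnum : x ^ k ≤ ((k:ℝ) / Real.exp 1 ^ 2) ^ k := by
    apply pow_le_pow_left₀ hx
    rw [le_div_iff₀ (by positivity)]
    exact hxk
  have hden : Real.exp 1 * ((k:ℝ) / Real.exp 1) ^ k ≤ (k.factorial : ℝ) :=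
    factorial_lower k hk
  have hdenpos : (0:ℝ) < Real.exp 1 * ((k:ℝ) / Real.exp 1) ^ k := by positivity
  have h1 : x ^ k / (k.factorial : ℝ)
      ≤ ((k:ℝ) / Real.exp 1 ^ 2) ^ k / (Real.exp 1 * ((k:ℝ) / Real.exp 1) ^ k) :=
    div_le_div₀ (by positivity) hnum hdenpos hden
  refine h1.trans (le_of_eq ?_)
  have hkk : ((k:ℝ)) ^ k ≠ 0 := by positivity
  rw [div_pow, div_pow]
  field_simp
  have e2 : Real.exp 2 ^ k = Real.exp (2 * (k:ℝ)) := by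
    rw [← Real.exp_nat_mul]; ring_nf
  have e3 : Real.exp (2 * (k:ℝ)) = Real.exp (k:ℝ) * Real.exp (k:ℝ) := by
    rw [← Real.exp_add]; ring_nf
  rw [← mul_pow, pow_two, mul_assoc, mul_one_div_cancel hE.ne', mul_one]

end LRaux

open LRaux in
set_option maxHeartbeats 1000000 in
set_option synthInstance.maxHeartbeats 1000000 in
theorem lr_aux {n : ℕ} (H B : Matrix (Fin n) (Fin n) ℂ)
    (hH : H.IsHermitian) (hB : B.IsHermitian)
    (hHnorm : ‖Matrix.toEuclideanCLM (𝕜 := ℂ) H‖ ≤ 1) (Δ : ℝ) (hΔ : 0 < Δ)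
    (hrange : ∀ S₁ S₂ : Set ℝ, (∀ s ∈ S₁, ∀ t ∈ S₂, Δ ≤ |s - t|) →
      spectralProj hB S₁ * H * spectralProj hB S₂ = 0)
    (S₁ S₂ : Set ℝ) (d : ℝ) (hd : 0 < d)
    (hsep : ∀ s ∈ S₁, ∀ t ∈ S₂, d ≤ |s - t|)
    (t : ℝ) (ht : |t| ≤ d / (Real.exp 2 * Δ)) :
    ‖Matrix.toEuclideanCLM (𝕜 := ℂ) (spectralProj hB S₁ *
        NormedSpace.exp ((Complex.I * t) • H) *
        spectralProj hB S₂)‖ ≤ Real.exp (-(d / Δ)) := by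
  have hE : (0:ℝ) < Real.exp 1 := Real.exp_pos 1
  have h2E : (2:ℝ) ≤ Real.exp 1 := by
    have := Real.add_one_le_exp 1; linarith
  set r : ℝ := (Real.exp 1)⁻¹ with hr
  have hr0 : 0 ≤ r := by positivity
  have hrE : r * Real.exp 1 = 1 := inv_mul_cancel₀ (ne_of_gt hE)
  have hr1 : r < 1 := by nlinarith
  set g := Matrix.toEuclideanCLM (𝕜 := ℂ) (n := Fin n) with hg
  set A := g H with hA
  set p₁ := g (spectralProj hB S₁) with hp₁
  set p₂ := g (spectralProj hB S₂) with hp₂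
  set c : ℂ := Complex.I * t with hc
  have hcnorm : ‖c‖ = |t| := by
    rw [hc, norm_mul, Complex.norm_I, one_mul, Complex.norm_real, Real.norm_eq_abs]
  have hAnorm : ‖A‖ ≤ 1 := hHnorm
  have hp₁n : ‖p₁‖ ≤ 1 := norm_toCLM_spectralProj_le hB S₁
  have hp₂n : ‖p₂‖ ≤ 1 := norm_toCLM_spectralProj_le hB S₂
  set m : ℕ := ⌈d / Δ⌉₊ with hm
  have hdΔ : 0 < d / Δ := div_pos hd hΔ
  have hm1 : 1 ≤ m := by
    rw [hm]
    exact Nat.one_le_iff_ne_zero.mpr (by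
      intro h0
      have := Nat.ceil_eq_zero.mp h0
      linarith)
  have hmd : d / Δ ≤ (m:ℝ) := Nat.le_ceil _
  have hvanish : ∀ k, k < m → p₁ * A ^ k * p₂ = 0 := by
    intro k hk
    have hkd : (k:ℝ) * Δ < d := by
      have h1 : (k:ℝ) < d / Δ := by
        have := (Nat.lt_ceil (n := k) (a := d/Δ)).mp (by rwa [← hm])
        exact this
      calc (k:ℝ) * Δ < (d/Δ) * Δ := mul_lt_mul_of_pos_right h1 hΔ
        _ = d := div_mul_cancel₀ d (ne_of_gt hΔ)
    have h0 := vanish hB hΔ hrange S₁ k d hd hkd S₂ hsep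
    rw [hp₁, hp₂, hA, ← map_pow, ← map_mul, ← map_mul, h0, map_zero]
  have hs : HasSum (fun k => ((k.factorial : ℂ))⁻¹ • (c • A) ^ k)
      (NormedSpace.exp (c • A)) := by
    rw [NormedSpace.exp_eq_tsum ℂ]
    exact (NormedSpace.expSeries_summable' (𝕂 := ℂ) (c • A)).hasSum
  set F : ℕ → (EuclideanSpace ℂ (Fin n) →L[ℂ] EuclideanSpace ℂ (Fin n)) :=
    fun k => (((k.factorial : ℂ))⁻¹ * c ^ k) • (p₁ * A ^ k * p₂) with hF
  have hsF : HasSum F (p₁ * NormedSpace.exp (c • A) * p₂) := by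
    have h1 := (hs.mul_left p₁).mul_right p₂
    have h2 : (fun k => p₁ * (((k.factorial : ℂ))⁻¹ • (c • A) ^ k) * p₂) = F := by
      funext k
      simp only [hF, smul_pow, smul_smul, mul_smul_comm, smul_mul_assoc]
    rwa [h2] at h1
  have hFz : ∀ k, k < m → F k = 0 := by
    intro k hk
    simp only [hF]
    rw [hvanish k hk]
    ext x
    simp
  have hinj : Function.Injective (fun j : ℕ => m + j) := fun a b h => by simpa using h
  have hsupp : ∀ x, x ∉ Set.range (fun j : ℕ => m + j) → F x = 0 := by
    intro x hx
    apply hFz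
    by_contra hxm
    push_neg at hxm
    exact hx ⟨x - m, by show m + (x - m) = x; omega⟩
  have hsF2 : HasSum (fun j => F (m + j)) (p₁ * NormedSpace.exp (c • A) * p₂) :=
    (Function.Injective.hasSum_iff hinj hsupp).mpr hsF
  have hterm : ∀ j : ℕ, ‖F (m + j)‖ ≤ (r * r ^ m) * r ^ j := by
    intro j
    set k := m + j with hk
    have hk1 : 1 ≤ k := le_trans hm1 (Nat.le_add_right m j)
    have htE : |t| * Real.exp 1 ^ 2 ≤ (k:ℝ) := by
      have hexp2 : Real.exp 1 ^ 2 = Real.exp 2 := by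
        rw [← Real.exp_nat_mul]; norm_num
      have ht' : |t| * (Real.exp 2 * Δ) ≤ d := by
        rw [← le_div_iff₀ (by positivity)]
        exact ht
      have h2 : |t| * Real.exp 2 ≤ d / Δ := by
        rw [le_div_iff₀ hΔ, mul_assoc]
        exact ht'
      have h3 : (m:ℝ) ≤ (k:ℝ) := by exact_mod_cast Nat.le_add_right m j
      calc |t| * Real.exp 1 ^ 2 = |t| * Real.exp 2 := by rw [hexp2]
        _ ≤ d / Δ := h2
        _ ≤ (m:ℝ) := hmd
        _ ≤ (k:ℝ) := h3
    have hppp : ‖p₁ * A ^ k * p₂‖ ≤ 1 := by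
      have hAk : ‖A ^ k‖ ≤ 1 := by
        calc ‖A ^ k‖ ≤ ‖A‖ ^ k := norm_pow_le' A (by omega)
          _ ≤ 1 := pow_le_one₀ (norm_nonneg _) hAnorm
      calc ‖p₁ * A ^ k * p₂‖ ≤ ‖p₁ * A ^ k‖ * ‖p₂‖ := norm_mul_le _ _
        _ ≤ ‖p₁‖ * ‖A ^ k‖ * ‖p₂‖ :=
            mul_le_mul_of_nonneg_right (norm_mul_le _ _) (norm_nonneg _)
        _ ≤ 1 * 1 * 1 := by
            apply mul_le_mul _ hp₂n (norm_nonneg _) (by norm_num)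
            exact mul_le_mul hp₁n hAk (norm_nonneg _) (by linarith [norm_nonneg p₁])
        _ = 1 := by norm_num
    have hnorm1 : ‖F k‖ ≤ |t| ^ k / (k.factorial : ℝ) := by
      simp only [hF]
      rw [clm_norm_smul (n := n) (((k.factorial : ℂ))⁻¹ * c ^ k) (p₁ * A ^ k * p₂)]
      have hsc : ‖((k.factorial : ℂ))⁻¹ * c ^ k‖ = (k.factorial : ℝ)⁻¹ * |t| ^ k := by
        rw [norm_mul, norm_inv, norm_pow, hcnorm]
        norm_num
      rw [hsc]
      calc (k.factorial : ℝ)⁻¹ * |t| ^ k * ‖p₁ * A ^ k * p₂‖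
          ≤ (k.factorial : ℝ)⁻¹ * |t| ^ k * 1 :=
            mul_le_mul_of_nonneg_left hppp (by positivity)
        _ = |t| ^ k / (k.factorial : ℝ) := by ring
    have hnum := pow_div_factorial_le (abs_nonneg t) k hk1 htE
    calc ‖F k‖ ≤ |t| ^ k / (k.factorial : ℝ) := hnorm1
      _ ≤ r * r ^ k := hnum
      _ = (r * r ^ m) * r ^ j := by rw [hk, pow_add]; ring
  have hgeo : Summable (fun j : ℕ => (r * r ^ m) * r ^ j) :=
    (summable_geometric_of_lt_one hr0 hr1).mul_left _
  have hFs : Summable (fun j => ‖F (m + j)‖) :=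
    Summable.of_nonneg_of_le (fun j => norm_nonneg _) hterm hgeo
  have hnormle : ‖p₁ * NormedSpace.exp (c • A) * p₂‖ ≤ (r * r ^ m) * (1 - r)⁻¹ := by
    rw [← hsF2.tsum_eq]
    calc ‖∑' j, F (m + j)‖ ≤ ∑' j, ‖F (m + j)‖ := norm_tsum_le_tsum_norm hFs
      _ ≤ ∑' j : ℕ, (r * r ^ m) * r ^ j := Summable.tsum_le_tsum hterm hFs hgeo
      _ = (r * r ^ m) * ∑' j : ℕ, r ^ j := tsum_mul_left
      _ = (r * r ^ m) * (1 - r)⁻¹ := by rw [tsum_geometric_of_lt_one hr0 hr1]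
  have hfinal : (r * r ^ m) * (1 - r)⁻¹ ≤ Real.exp (-(d/Δ)) := by
    have h1r : 0 < 1 - r := by linarith
    have hrle : r * (1 - r)⁻¹ ≤ 1 := by
      rw [← div_eq_mul_inv, div_le_one h1r]
      nlinarith
    have hrm : r ^ m ≤ Real.exp (-(d/Δ)) := by
      have e1 : r ^ m = Real.exp (-(m:ℝ)) := by
        rw [hr, ← Real.exp_neg, ← Real.exp_nat_mul]
        ring_nf
      rw [e1]
      apply Real.exp_le_exp.mpr
      linarith
    calc (r * r ^ m) * (1 - r)⁻¹ = r ^ m * (r * (1 - r)⁻¹) := by ring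
      _ ≤ r ^ m * 1 := mul_le_mul_of_nonneg_left hrle (by positivity)
      _ = r ^ m := mul_one _
      _ ≤ Real.exp (-(d/Δ)) := hrm
  have hgoal : g (spectralProj hB S₁ * NormedSpace.exp ((Complex.I * t) • H) *
      spectralProj hB S₂) = p₁ * NormedSpace.exp (c • A) * p₂ := by
    rw [map_mul, map_mul, toCLM_exp, map_smul, hp₁, hp₂, hA, hc]
  rw [show (Matrix.toEuclideanCLM (𝕜 := ℂ) (spectralProj hB S₁ *
      NormedSpace.exp ((Complex.I * t) • H) * spectralProj hB S₂)) =
      p₁ * NormedSpace.exp (c • A) * p₂ from hgoal]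
  exact le_trans hnormle hfinal


/-- **A Lieb–Robinson-type bound.**
Let `H, B` be Hermitian, `‖H‖ ≤ 1`, and suppose `E_{S₁}(B) H E_{S₂}(B) = 0` whenever
`dist(S₁, S₂) ≥ Δ > 0`. Fix sets `S₁, S₂` at distance at least `d > 0`. Then for every
real `t` with `|t| ≤ d/(e² Δ)`, `‖E_{S₁}(B) e^{itH} E_{S₂}(B)‖ ≤ e^{-d/Δ}`. -/
theorem stmt_15 {n : ℕ} (H B : Matrix (Fin n) (Fin n) ℂ)
    (hH : H.IsHermitian) (hB : B.IsHermitian)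
    (hHnorm : opNorm H ≤ 1) (Δ : ℝ) (hΔ : 0 < Δ)
    (hrange : ∀ S₁ S₂ : Set ℝ, (∀ s ∈ S₁, ∀ t ∈ S₂, Δ ≤ |s - t|) →
      spectralProj hB S₁ * H * spectralProj hB S₂ = 0)
    (S₁ S₂ : Set ℝ) (d : ℝ) (hd : 0 < d)
    (hsep : ∀ s ∈ S₁, ∀ t ∈ S₂, d ≤ |s - t|)
    (t : ℝ) (ht : |t| ≤ d / (Real.exp 2 * Δ)) :
    opNorm (spectralProj hB S₁ * NormedSpace.exp ((Complex.I * t) • H) *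
        spectralProj hB S₂) ≤ Real.exp (-(d / Δ)) :=
  lr_aux H B hH hB hHnorm Δ hΔ hrange S₁ S₂ d hd hsep t ht
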